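/- Let (X,d) be a metric space, γ : [0,1] → X a continuous curve, x ∈ X, 0 < r < R < ∞, and n ∈ ℕ. Then N^γ_{r,R}(x) ≤ n if and only if there exist time instances 0 = s₀ < s₁ < … < s_n < s_{n+1} = 1 such that for every j ∈ {0, 1, …, n} the restriction of γ to [s_j, s_{j+1}] does not cross A_{r,R}(x), i.e. has no A_{r,R}(x)-crossing interval. -/

import Mathlib

open Set Metric

/-- `(a, b)` is an `A_{r,R}(x)`-crossing interval of the curve `γ`: `a < b`,
`γ((a,b))` lies in the open annulus `{y | r < d(x,y) < R}`, and the distances of the two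
endpoints to `x` are exactly `{r, R}`. -/
def IsCrossing {X : Type*} [MetricSpace X] (γ : ℝ → X) (x : X) (r R a b : ℝ) : Prop :=
  a < b ∧ (∀ t ∈ Set.Ioo a b, r < dist x (γ t) ∧ dist x (γ t) < R) ∧
    ({dist x (γ a), dist x (γ b)} : Set ℝ) = {r, R}

/-- The set `C^γ_{r,R}(x)` of all `A_{r,R}(x)`-crossing intervals of `γ : [0,1] → X`. -/
def crossingSet {X : Type*} [MetricSpace X] (γ : ℝ → X) (x : X) (r R : ℝ) : Set (ℝ × ℝ) :=
  {p | 0 ≤ p.1 ∧ p.2 ≤ 1 ∧ IsCrossing γ x r R p.1 p.2}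

section AuxLemmas

variable {X : Type*} [MetricSpace X]

/-- The distances of the endpoints of a crossing to `x` belong to `{r, R}`. -/
lemma IsCrossing.endpoint_dist {γ : ℝ → X} {x : X} {r R a b : ℝ}
    (h : IsCrossing γ x r R a b) :
    (dist x (γ a) = r ∨ dist x (γ a) = R) ∧ (dist x (γ b) = r ∨ dist x (γ b) = R) := by
  obtain ⟨-, -, h3⟩ := h
  constructor
  · have : dist x (γ a) ∈ ({r, R} : Set ℝ) := by rw [← h3]; simp
    simpa using this
  · have : dist x (γ b) ∈ ({r, R} : Set ℝ) := by rw [← h3]; simp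
    simpa using this

/-- No point of distance `r` or `R` from `x` lies in the interior of a crossing interval. -/
lemma IsCrossing.not_interior {γ : ℝ → X} {x : X} {r R a b t : ℝ}
    (h : IsCrossing γ x r R a b) (h1 : a < t) (h2 : t < b)
    (hd : dist x (γ t) = r ∨ dist x (γ t) = R) : False := by
  obtain ⟨-, hmid, -⟩ := h
  have := hmid t ⟨h1, h2⟩
  rcases hd with h' | h' <;> linarith [this.1, this.2]

/-- Two distinct crossing intervals do not overlap. -/
lemma crossing_nonoverlap {γ : ℝ → X} {x : X} {r R : ℝ} (hrR : r < R)
    {p q : ℝ × ℝ} (hp : IsCrossing γ x r R p.1 p.2) (hq : IsCrossing γ x r R q.1 q.2)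
    (hne : p ≠ q) : p.2 ≤ q.1 ∨ q.2 ≤ p.1 := by
  rcases lt_trichotomy p.1 q.1 with h | h | h
  · left
    by_contra hcon
    push_neg at hcon
    exact hp.not_interior h hcon hq.endpoint_dist.1
  · -- p.1 = q.1; show the crossings coincide, contradiction
    exfalso
    rcases lt_trichotomy p.2 q.2 with h2 | h2 | h2
    · exact hq.not_interior (h ▸ hp.1) h2 hp.endpoint_dist.2
    · exact hne (Prod.ext h h2)
    · exact hp.not_interior (h ▸ hq.1) h2 hq.endpoint_dist.2
  · right
    by_contra hcon
    push_neg at hcon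
    exact hq.not_interior h hcon hp.endpoint_dist.1

/-- A sequence strictly increasing on `{0, …, n}` is monotone on `{0, …, n+1}`. -/
lemma mono_of_strict {s : ℕ → ℝ} {n : ℕ} (h : ∀ j ≤ n, s j < s (j + 1)) :
    ∀ i j, i ≤ j → j ≤ n + 1 → s i ≤ s j := by
  intro i j hij hj
  induction j with
  | zero =>
    have : i = 0 := Nat.le_zero.mp hij
    simp [this]
  | succ k ih =>
    rcases Nat.eq_or_lt_of_le hij with h1 | h1
    · rw [h1]
    · have hk : s i ≤ s k := ih (Nat.lt_succ_iff.mp h1) (by omega)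
      exact hk.trans (h k (by omega)).le

/-- Abstract separation lemma: a family of at most `n` pairwise non-overlapping intervals
inside `[0, e]` can be separated by `n + 2` points `0 = s₀ < … < s_{n+1} = e`. -/
lemma aux_sep : ∀ (n : ℕ) (e : ℝ) (T : Set (ℝ × ℝ)), 0 < e →
    (∀ p ∈ T, 0 ≤ p.1 ∧ p.1 < p.2 ∧ p.2 ≤ e) →
    (∀ p ∈ T, ∀ q ∈ T, p ≠ q → p.2 ≤ q.1 ∨ q.2 ≤ p.1) →
    T.encard ≤ (n : ℕ∞) →
    ∃ s : ℕ → ℝ, s 0 = 0 ∧ s (n + 1) = e ∧ (∀ j ≤ n, s j < s (j + 1)) ∧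
      ∀ j ≤ n, ∀ p ∈ T, ¬(s j ≤ p.1 ∧ p.2 ≤ s (j + 1)) := by
  intro n
  induction n with
  | zero =>
    intro e T he _ _ hcard
    have hT : T = ∅ := by
      rw [← Set.encard_eq_zero]
      simpa using hcard
    refine ⟨fun j => if j = 0 then 0 else e, by simp, by simp, ?_, ?_⟩
    · intro j hj
      have hj0 : j = 0 := Nat.le_zero.mp hj
      simp [hj0, he]
    · intro j hj p hp
      rw [hT] at hp
      exact absurd hp (Set.notMem_empty p)
  | succ n ih =>
    intro e T he hb hno hcard
    rcases Set.eq_empty_or_nonempty T with hT | hT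
    · refine ⟨fun j => j * e / (n + 2), by simp, ?_, ?_, ?_⟩
      · have h2 : ((n : ℝ) + 2) ≠ 0 := by positivity
        push_cast
        field_simp
        ring
      · intro j hj
        have h2 : (0:ℝ) < (n : ℝ) + 2 := by positivity
        have hjj : (j : ℝ) * e < ((j : ℝ) + 1) * e := by nlinarith
        push_cast
        exact (div_lt_div_iff_of_pos_right h2).mpr hjj
      · intro j hj p hp
        rw [hT] at hp
        exact absurd hp (Set.notMem_empty p)
    · have hfin : T.Finite := Set.finite_of_encard_le_coe hcard
      obtain ⟨p, hpT, hmax⟩ := Set.Finite.exists_maximalFor (fun q => q.2) T hfin hT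
      have hle : ∀ q ∈ T, q.2 ≤ p.2 := by
        intro q hq
        by_contra hcon
        push_neg at hcon
        have := hmax hq hcon.le
        simp only at this
        linarith
      obtain ⟨hp0, hp12, hp2e⟩ := hb p hpT
      set c := (p.1 + p.2) / 2 with hc
      have hc1 : p.1 < c := by rw [hc]; linarith
      have hc2 : c < p.2 := by rw [hc]; linarith
      have hcpos : 0 < c := lt_of_le_of_lt hp0 hc1
      have hT'b : ∀ q ∈ T \ {p}, 0 ≤ q.1 ∧ q.1 < q.2 ∧ q.2 ≤ c := by
        rintro q ⟨hqT, hqp⟩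
        simp only [Set.mem_singleton_iff] at hqp
        obtain ⟨hq0, hq12, -⟩ := hb q hqT
        refine ⟨hq0, hq12, ?_⟩
        rcases hno q hqT p hpT hqp with h | h
        · exact h.trans hc1.le
        · exfalso
          have := hle q hqT
          linarith
      have hT'no : ∀ a ∈ T \ {p}, ∀ b ∈ T \ {p}, a ≠ b → a.2 ≤ b.1 ∨ b.2 ≤ a.1 :=
        fun a ha b hb' hab => hno a ha.1 b hb'.1 hab
      have hcard' : (T \ {p}).encard ≤ (n : ℕ∞) := by
        have h1 := Set.encard_diff_singleton_add_one hpT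
        have h2 : (T \ {p}).encard + 1 ≤ (n : ℕ∞) + 1 := by
          rw [h1]
          exact le_trans hcard (by push_cast; rfl)
        exact (ENat.add_le_add_iff_right (by simp)).mp h2
      obtain ⟨s', h0', h1', hst', hsep'⟩ := ih c (T \ {p}) hcpos hT'b hT'no hcard'
      have hmono := mono_of_strict hst'
      set s : ℕ → ℝ := fun j => if j = n + 2 then e else s' j with hs
      have hsj : ∀ j, j ≤ n + 1 → s j = s' j := by
        intro j hj
        simp only [hs]
        exact if_neg (by omega)
      have hslast : s (n + 2) = e := by simp [hs]
      refine ⟨s, by rw [hsj 0 (by omega), h0'], hslast, ?_, ?_⟩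
      · intro j hj
        by_cases hjn : j ≤ n
        · rw [hsj j (by omega), hsj (j+1) (by omega)]
          exact hst' j hjn
        · have hje : j = n + 1 := by omega
          rw [hje, hsj (n+1) le_rfl, h1', hslast]
          linarith
      · rintro j hj q hqT ⟨hq1, hq2⟩
        by_cases hjn : j ≤ n
        · rw [hsj j (by omega)] at hq1
          rw [hsj (j+1) (by omega)] at hq2
          by_cases hqp : q = p
          · subst hqp
            have hup : s' (j+1) ≤ s' (n+1) := hmono (j+1) (n+1) (by omega) le_rfl
            rw [h1'] at hup
            linarith
          · exact hsep' j hjn q ⟨hqT, hqp⟩ ⟨hq1, hq2⟩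
        · have hje : j = n + 1 := by omega
          rw [hje, hsj (n+1) le_rfl, h1'] at hq1
          by_cases hqp : q = p
          · subst hqp
            linarith
          · have hq2c := (hT'b q ⟨hqT, hqp⟩).2.2
            have hq12 := (hb q hqT).2.1
            linarith

end AuxLemmas

/-- `N^γ_{r,R}(x) ≤ n` holds if and only if there are time instances
`0 = s₀ < s₁ < … < s_n < s_{n+1} = 1` such that for every `j ≤ n` the restriction of `γ` to
`[s_j, s_{j+1}]` has no `A_{r,R}(x)`-crossing interval. -/
theorem crossing_count_le_iff_separating_sequence
    {X : Type*} [MetricSpace X] (γ : ℝ → X) (hγ : ContinuousOn γ (Set.Icc 0 1))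
    (x : X) (r R : ℝ) (hr : 0 < r) (hrR : r < R) (n : ℕ) :
    (crossingSet γ x r R).encard ≤ (n : ℕ∞) ↔
      ∃ s : ℕ → ℝ, s 0 = 0 ∧ s (n + 1) = 1 ∧ (∀ j ≤ n, s j < s (j + 1)) ∧
        ∀ j ≤ n, ¬ ∃ a b : ℝ, s j ≤ a ∧ b ≤ s (j + 1) ∧ IsCrossing γ x r R a b := by
  classical
  constructor
  · -- forward direction: use the abstract separation lemma
    intro hcard
    have hb : ∀ p ∈ crossingSet γ x r R, 0 ≤ p.1 ∧ p.1 < p.2 ∧ p.2 ≤ 1 :=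
      fun p hp => ⟨hp.1, hp.2.2.1, hp.2.1⟩
    have hno : ∀ p ∈ crossingSet γ x r R, ∀ q ∈ crossingSet γ x r R, p ≠ q →
        p.2 ≤ q.1 ∨ q.2 ≤ p.1 :=
      fun p hp q hq hne => crossing_nonoverlap hrR hp.2.2 hq.2.2 hne
    obtain ⟨s, h0, h1, hst, hsep⟩ := aux_sep n 1 (crossingSet γ x r R) one_pos hb hno hcard
    refine ⟨s, h0, h1, hst, ?_⟩
    rintro j hj ⟨a, b, ha, hbb, hcross⟩
    have hmono := mono_of_strict hst
    have ha0 : 0 ≤ a := by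
      have := hmono 0 j (Nat.zero_le _) (by omega)
      rw [h0] at this
      linarith
    have hb1 : b ≤ 1 := by
      have := hmono (j+1) (n+1) (by omega) le_rfl
      rw [h1] at this
      linarith
    exact hsep j hj (a, b) ⟨ha0, hb1, hcross⟩ ⟨ha, hbb⟩
  · -- reverse direction: count crossings via the largest separating point below the start
    rintro ⟨s, h0, h1, hst, hsep⟩
    set F : ℝ × ℝ → ℕ := fun p => Nat.findGreatest (fun j => s j ≤ p.1) (n + 1) with hF
    have hmono := mono_of_strict hst
    have key : ∀ p ∈ crossingSet γ x r R, F p < n ∧ s (F p) ≤ p.1 ∧ s (F p + 1) ≤ p.2 := by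
      intro p hp
      obtain ⟨hp0, hp1, hpc⟩ := hp
      have hab : p.1 < p.2 := hpc.1
      have hP0 : s 0 ≤ p.1 := by rw [h0]; exact hp0
      have hjle : F p ≤ n + 1 := Nat.findGreatest_le _
      have hspec : s (F p) ≤ p.1 := by
        have h' : (fun j => s j ≤ p.1) (Nat.findGreatest (fun j => s j ≤ p.1) (n + 1)) :=
          Nat.findGreatest_spec (P := fun j => s j ≤ p.1) (n := n + 1) (m := 0)
            (Nat.zero_le _) hP0
        simpa only [hF] using h'
      have h1' : F p ≠ n + 1 := by
        intro h
        rw [h, h1] at hspec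
        linarith
      have h2' : F p ≠ n := by
        intro h
        refine hsep n le_rfl ⟨p.1, p.2, ?_, ?_, hpc⟩
        · rw [← h]; exact hspec
        · rw [h1]; exact hp1
      have hflt : F p < n := by omega
      have hnext : s (F p + 1) ≤ p.2 := by
        by_contra hcon
        push_neg at hcon
        exact hsep (F p) (by omega) ⟨p.1, p.2, hspec, hcon.le, hpc⟩
      exact ⟨hflt, hspec, hnext⟩
    have hgt : ∀ p ∈ crossingSet γ x r R, p.1 < s (F p + 1) := by
      intro p hp
      have hlt : F p < n := (key p hp).1
      have hng : ¬ s (F p + 1) ≤ p.1 := by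
        have hlt' : Nat.findGreatest (fun j => s j ≤ p.1) (n + 1) < F p + 1 := by
          simp only [hF]
          omega
        have hle' : F p + 1 ≤ n + 1 := by omega
        have h' : ¬ (fun j => s j ≤ p.1) (F p + 1) :=
          Nat.findGreatest_is_greatest hlt' (by simpa only [hF] using hle')
        simpa only using h'
      exact lt_of_not_ge hng
    have hinj : Set.InjOn F (crossingSet γ x r R) := by
      intro p hp q hq hFeq
      by_contra hne
      rcases crossing_nonoverlap hrR hp.2.2 hq.2.2 hne with h | h
      · have h1p := (key p hp).2.2
        have h2q := hgt q hq
        rw [hFeq] at h1p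
        linarith
      · have h1q := (key q hq).2.2
        have h2p := hgt p hp
        rw [← hFeq] at h1q
        linarith
    calc (crossingSet γ x r R).encard = (F '' crossingSet γ x r R).encard :=
          (hinj.encard_image).symm
      _ ≤ ((Finset.range n : Finset ℕ) : Set ℕ).encard := by
          apply Set.encard_mono
          rintro _ ⟨p, hp, rfl⟩
          simp only [Finset.coe_range, Set.mem_Iio]
          exact (key p hp).1
      _ = (n : ℕ∞) := by
          rw [Set.encard_coe_eq_coe_finsetCard, Finset.card_range]
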